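/- Andreief's identity: for integrable functions φ_1,…,φ_n and ψ_1,…,ψ_n on a measure space (X,μ) with all products φ_iψ_j integrable, one has ∫_{X^n} det(φ_i(x_j))·det(ψ_i(x_j)) dμ(x_1)⋯dμ(x_n) = n!·det(∫_X φ_i(x)ψ_j(x) dμ(x)). -/

import Mathlib

open MeasureTheory

/-- Andreief's identity: for integrable functions `φ_1, …, φ_n` and `ψ_1, …, ψ_n` on a σ-finite
measure space `(X, μ)` with all products `φ_i ψ_j` integrable,
`∫_{X^n} det(φ_i(x_j)) ⬝ det(ψ_i(x_j)) dμ^n = n! ⬝ det (∫_X φ_i ψ_j dμ)`. -/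
theorem andreief {X : Type*} [MeasurableSpace X] (μ : Measure X) [SigmaFinite μ]
    (n : ℕ) (φ ψ : Fin n → X → ℂ)
    (hφ : ∀ i, Integrable (φ i) μ) (hψ : ∀ i, Integrable (ψ i) μ)
    (hφψ : ∀ i j, Integrable (fun x => φ i x * ψ j x) μ) :
    ∫ x : Fin n → X,
        (Matrix.det (Matrix.of fun i j : Fin n => φ i (x j))) *
          (Matrix.det (Matrix.of fun i j : Fin n => ψ i (x j)))
        ∂(Measure.pi fun _ => μ)
      = (Nat.factorial n : ℂ) *
        Matrix.det (Matrix.of fun i j : Fin n => ∫ x, φ i x * ψ j x ∂μ) := by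
  classical
  letI : MeasureSpace X := ⟨μ⟩
  have hSF : SigmaFinite (volume : Measure X) := ‹SigmaFinite μ›
  set A : Matrix (Fin n) (Fin n) ℂ := Matrix.of fun i j => ∫ x, φ i x * ψ j x ∂μ with hA
  have key : ∀ σ τ : Equiv.Perm (Fin n),
      (∫ x : Fin n → X, ∏ j, (φ (σ j) (x j) * ψ (τ j) (x j)) ∂(Measure.pi fun _ => μ))
        = ∏ j, A (σ j) (τ j) := fun σ τ =>
    integral_fintype_prod_eq_prod (fun j y => φ (σ j) y * ψ (τ j) y)
  have hint : ∀ σ τ : Equiv.Perm (Fin n),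
      Integrable (fun x : Fin n → X => ∏ j, (φ (σ j) (x j) * ψ (τ j) (x j)))
        (Measure.pi fun _ => μ) := fun σ τ =>
    Integrable.fintype_prod (f := fun j y => φ (σ j) y * ψ (τ j) y)
      (fun j => hφψ (σ j) (τ j))
  have hε : ∀ σ : Equiv.Perm (Fin n),
      ((Equiv.Perm.sign σ : ℤ) : ℂ) * ((Equiv.Perm.sign σ : ℤ) : ℂ) = 1 := fun σ => by
    rcases Int.units_eq_one_or (Equiv.Perm.sign σ) with h | h <;> simp [h]
  calc
    ∫ x : Fin n → X,
        (Matrix.det (Matrix.of fun i j : Fin n => φ i (x j))) *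
          (Matrix.det (Matrix.of fun i j : Fin n => ψ i (x j)))
        ∂(Measure.pi fun _ => μ)
      = ∫ x : Fin n → X, ∑ σ : Equiv.Perm (Fin n), ∑ τ : Equiv.Perm (Fin n),
          (((Equiv.Perm.sign σ : ℤ) : ℂ) * ((Equiv.Perm.sign τ : ℤ) : ℂ)) *
            ∏ j, (φ (σ j) (x j) * ψ (τ j) (x j)) ∂(Measure.pi fun _ => μ) := by
        congr 1; funext x
        rw [Matrix.det_apply', Matrix.det_apply', Finset.sum_mul_sum]
        refine Finset.sum_congr rfl fun σ _ => Finset.sum_congr rfl fun τ _ => ?_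
        simp only [Matrix.of_apply]
        rw [Finset.prod_mul_distrib]
        ring
    _ = ∑ σ : Equiv.Perm (Fin n), ∑ τ : Equiv.Perm (Fin n),
          (((Equiv.Perm.sign σ : ℤ) : ℂ) * ((Equiv.Perm.sign τ : ℤ) : ℂ)) *
            ∏ j, A (σ j) (τ j) := by
        rw [integral_finset_sum _ (fun σ _ => integrable_finset_sum _
          (fun τ _ => ((hint σ τ).const_mul _)))]
        refine Finset.sum_congr rfl fun σ _ => ?_
        rw [integral_finset_sum _ (fun τ _ => ((hint σ τ).const_mul _))]
        refine Finset.sum_congr rfl fun τ _ => ?_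
        rw [integral_const_mul, key σ τ]
    _ = ∑ σ : Equiv.Perm (Fin n), A.det := by
        refine Finset.sum_congr rfl fun σ _ => ?_
        rw [← Equiv.sum_comp (Equiv.mulRight σ) (fun τ : Equiv.Perm (Fin n) =>
          (((Equiv.Perm.sign σ : ℤ) : ℂ) * ((Equiv.Perm.sign τ : ℤ) : ℂ)) *
            ∏ j, A (σ j) (τ j))]
        rw [← Matrix.det_transpose A, Matrix.det_apply']
        refine Finset.sum_congr rfl fun ρ _ => ?_
        have h1 : ∏ j, A (σ j) ((Equiv.mulRight σ ρ) j) = ∏ i, A.transpose (ρ i) i := by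
          simp only [Equiv.coe_mulRight, Equiv.Perm.mul_apply, Matrix.transpose_apply]
          exact Equiv.prod_comp σ (fun i => A i (ρ i))
        have h2 : ((Equiv.Perm.sign σ : ℤ) : ℂ) *
            ((Equiv.Perm.sign (Equiv.mulRight σ ρ) : ℤ) : ℂ) = ((Equiv.Perm.sign ρ : ℤ) : ℂ) := by
          simp only [Equiv.coe_mulRight, Equiv.Perm.sign_mul, Units.val_mul, Int.cast_mul]
          linear_combination ((Equiv.Perm.sign ρ : ℤ) : ℂ) * hε σ
        simp only [h1, h2]
    _ = (Nat.factorial n : ℂ) * A.det := by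
        rw [Finset.sum_const, Finset.card_univ, Fintype.card_perm, Fintype.card_fin, nsmul_eq_mul]
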